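/- Let A be a local commutative ring with maximal ideal m, and let O ⊆ A be a subring containing m such that O/m is a valuation ring with fraction field A/m (a 'semivaluation ring'). Let O' be an integrally closed local domain which is an O-algebra, such that m·O' ≠ O' and such that for every prime ideal p of O' lying over m the residue field extension κ(p)/Frac(O/m) is algebraic. Then the radical m' = √(m·O') is a prime ideal of O' and is the unique prime of O' over m, and the quotient O'/m' is an integrally closed (normal) domain. -/

import Mathlib

open Polynomial



/-- Splitting `eval₂` via `divX`. -/
private lemma stmt13_split {R S : Type*} [CommRing R] [CommRing S] (φ : R →+* S) (x : S)
    (f : R[X]) :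
    Polynomial.eval₂ φ x f = x * Polynomial.eval₂ φ x f.divX + φ (f.coeff 0) := by
  conv_lhs => rw [← Polynomial.X_mul_divX_add f]
  rw [Polynomial.eval₂_add, Polynomial.eval₂_mul, Polynomial.eval₂_X, Polynomial.eval₂_C]

/-- Core induction for the antichain lemma. -/
private lemma stmt13_AL {R S : Type*} [CommRing R] [CommRing S] [IsDomain S]
    (φ : R →+* S) (mO : Ideal R) (P Q : Ideal S) (hP : P.IsPrime) (hQ : Q.IsPrime)
    (hPQ : P ≤ Q)
    (hmP : ∀ r ∈ mO, φ r ∈ P)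
    (hcQ : ∀ r : R, φ r ∈ Q → r ∈ mO)
    (x : S) (hxQ : x ∈ Q) (hxP : x ∉ P) :
    ∀ (k : ℕ) (f : R[X]), f.coeff k ∉ mO → (∀ i < k, f.coeff i ∈ mO) →
      Polynomial.eval₂ φ x f ∈ P → False := by
  intro k
  induction k with
  | zero =>
    intro f hk _ hev
    have h2 : φ (f.coeff 0) ∈ Q := by
      have h1 : x * Polynomial.eval₂ φ x f.divX + φ (f.coeff 0) ∈ Q := by
        rw [← stmt13_split]; exact hPQ hev
      have h3 := Q.sub_mem h1 (Q.mul_mem_right (Polynomial.eval₂ φ x f.divX) hxQ)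
      simpa using h3
    exact hk (hcQ _ h2)
  | succ k ih =>
    intro f hk hlt hev
    have h0 : φ (f.coeff 0) ∈ P := hmP _ (hlt 0 (Nat.succ_pos k))
    have hxd : x * Polynomial.eval₂ φ x f.divX ∈ P := by
      have h3 := P.sub_mem hev h0
      rw [stmt13_split] at h3
      simpa using h3
    have hd : Polynomial.eval₂ φ x f.divX ∈ P := (hP.mem_or_mem hxd).resolve_left hxP
    refine ih f.divX ?_ ?_ hd
    · simpa [Polynomial.coeff_divX] using hk
    · intro i hi
      simpa [Polynomial.coeff_divX] using hlt (i + 1) (Nat.succ_lt_succ hi)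


private lemma stmt13_ML2 {O' : Type*} [CommRing O'] [IsDomain O'] [IsIntegrallyClosed O']
    (I : Ideal O') (hIne : I ≠ ⊤) (lam : O') (hlam : lam ≠ 0)
    (hdivpow : ∀ k : ℕ, I = Ideal.span {lam ^ k} * I)
    (a' : O') (g : O'[X]) (hg : g.Monic) (hdeg : 1 ≤ g.natDegree)
    (hev : (g.scaleRoots lam).eval a' ∈ I.radical) :
    ∃ b : O', a' = lam * b := by
  set F := FractionRing O'
  set ψ := algebraMap O' F with hψ
  have hψinj : Function.Injective ψ := IsFractionRing.injective O' F
  have hψlam : ψ lam ≠ 0 := fun h => hlam (hψinj (by simpa using h))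
  set E := (g.scaleRoots lam).eval a' with hE
  obtain ⟨N, hN⟩ := hev
  cases N with
  | zero =>
    exact absurd (Ideal.eq_top_iff_one I |>.mpr (by simpa using hN)) hIne
  | succ N =>
    set d := g.natDegree with hd
    have h1 : E ^ (N + 1) ∈ Ideal.span {lam ^ (d * (N + 1))} * I := by
      rw [← hdivpow]; exact hN
    obtain ⟨w, hwI, hw⟩ := Ideal.mem_span_singleton_mul.mp h1
    set ε : F := ψ E / ψ lam ^ d with hε
    have hεpow : ε ^ (N + 1) = ψ w := by
      have hcalc : ψ E ^ (N + 1) = (ψ lam ^ d) ^ (N + 1) * ψ w := by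
        rw [← map_pow, ← hw, map_mul, map_pow, ← pow_mul]
      rw [hε, div_pow, hcalc]
      exact mul_div_cancel_left₀ _ (pow_ne_zero _ (pow_ne_zero _ hψlam))
    have hεint : IsIntegral O' ε := by
      refine ⟨X ^ (N + 1) - C w, monic_X_pow_sub_C w (Nat.succ_ne_zero N), ?_⟩
      rw [eval₂_sub, eval₂_pow, eval₂_X, eval₂_C, ← hψ, hεpow, sub_self]
    obtain ⟨e₀, he₀⟩ := IsIntegrallyClosed.isIntegral_iff.mp hεint
    have he₀' : lam ^ d * e₀ = E := by
      apply hψinj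
      rw [map_mul, map_pow, ← hψ] at *
      rw [he₀, hε]
      rw [mul_div_assoc', mul_div_cancel_left₀ _ (pow_ne_zero _ hψlam)]
    set h : F := ψ a' / ψ lam with hh
    have hlh : ψ lam * h = ψ a' := by
      rw [hh]; rw [mul_div_assoc', mul_div_cancel_left₀ _ hψlam]
    have hkey : ψ lam ^ d * Polynomial.eval₂ ψ h g = ψ lam ^ d * ψ e₀ := by
      have h2 := Polynomial.scaleRoots_eval₂_mul (p := g) ψ h lam
      rw [hlh, Polynomial.eval₂_at_apply, ← hE] at h2
      rw [← hd] at h2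
      rw [← h2, ← he₀', map_mul, map_pow]
    have hgh : Polynomial.eval₂ ψ h g = ψ e₀ :=
      mul_left_cancel₀ (pow_ne_zero d hψlam) hkey
    have hint2 : IsIntegral O' h := by
      refine ⟨g - C e₀, ?_, ?_⟩
      · have hdlt : (C e₀).degree < g.degree := by
          apply lt_of_le_of_lt (Polynomial.degree_C_le)
          exact_mod_cast Polynomial.natDegree_pos_iff_degree_pos.mp (lt_of_lt_of_le Nat.zero_lt_one hdeg)
        have := hg.add_of_left (q := -(C e₀)) (by simpa using hdlt)
        simpa [sub_eq_add_neg] using this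
      · rw [eval₂_sub, eval₂_C, hgh, sub_self]
    obtain ⟨b, hb⟩ := IsIntegrallyClosed.isIntegral_iff.mp hint2
    refine ⟨b, hψinj ?_⟩
    rw [← hψ] at *
    rw [map_mul, hb, hh]
    rw [mul_div_assoc', mul_div_cancel_left₀ _ hψlam]


private lemma stmt13_nd2 {S : Type*} [CommRing S] [Nontrivial S] :
    (X ^ 2 - X : S[X]).natDegree = 2 := by
  compute_degree!

private lemma stmt13_monic2 {S : Type*} [CommRing S] [Nontrivial S] :
    (X ^ 2 - X : S[X]).Monic := by
  have h : (X ^ 2 - X : S[X]) = X ^ 2 + (-X) := by ring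
  rw [h]
  apply Polynomial.monic_X_pow_add
  rw [Polynomial.degree_neg, Polynomial.degree_X]
  decide

private lemma stmt13_scale2 {S : Type*} [CommRing S] [Nontrivial S] (lam : S) :
    (X ^ 2 - X : S[X]).scaleRoots lam = X ^ 2 - C lam * X := by
  ext i
  rw [Polynomial.coeff_scaleRoots, stmt13_nd2]
  match i with
  | 0 => simp
  | 1 => simp [pow_one]
  | 2 => simp [coeff_X_pow, coeff_X]
  | (n+3) => simp [coeff_X_pow, coeff_X, Nat.succ_ne_zero]

private def stmt13_SL {R S : Type*} [CommRing R] [CommRing S] (φ : R →+* S) (mO : Ideal R)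
    (h : mO.IsPrime) : Submonoid S where
  carrier := {z | ∃ c : R, c ∉ mO ∧ φ c = z}
  one_mem' := ⟨1, fun h1 => h.ne_top ((Ideal.eq_top_iff_one mO).mpr h1), map_one φ⟩
  mul_mem' := by
    rintro a b ⟨c, hc, rfl⟩ ⟨c', hc', rfl⟩
    exact ⟨c * c', fun hm => (h.mem_or_mem hm).elim hc hc', map_mul φ c c'⟩

private def stmt13_SP {S : Type*} [CommRing S] (P : Ideal S) (hP : P.IsPrime) (x : S) :
    Submonoid S where
  carrier := {z | ∃ s, s ∉ P ∧ ∃ n : ℕ, z = s * x ^ n}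
  one_mem' := ⟨1, fun h => hP.ne_top ((Ideal.eq_top_iff_one P).mpr h), 0, by simp⟩
  mul_mem' := by
    rintro a b ⟨s₁, hs₁, n₁, rfl⟩ ⟨s₂, hs₂, n₂, rfl⟩
    exact ⟨s₁ * s₂, fun h => ((hP.mem_or_mem h).elim hs₁ hs₂), n₁ + n₂, by ring⟩

theorem stmt13 (A : Type*) [CommRing A] [IsLocalRing A]
    (O : Subring A) (hm : (IsLocalRing.maximalIdeal A : Set A) ⊆ O)
    (hval : ∀ z : IsLocalRing.ResidueField A,
      z ∈ O.map (IsLocalRing.residue A) ∨ z⁻¹ ∈ O.map (IsLocalRing.residue A))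
    (O' : Type*) [CommRing O'] [IsDomain O'] [IsLocalRing O'] [IsIntegrallyClosed O']
    [Algebra O O']
    (mO : Ideal O) (hmO : mO = (IsLocalRing.maximalIdeal A).comap O.subtype)
    (hfiber : ∃ p : Ideal O', p.IsPrime ∧ p.comap (algebraMap O O') = mO)
    (halg : ∀ p : Ideal O', p.IsPrime → p.comap (algebraMap O O') = mO →
      ∀ x : O' ⧸ p, ∃ f : Polynomial O, (∃ i, f.coeff i ∉ mO) ∧
        Polynomial.eval₂ ((Ideal.Quotient.mk p).comp (algebraMap O O')) x f = 0) :
    (Ideal.map (algebraMap O O') mO).radical.IsPrime ∧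
    (Ideal.map (algebraMap O O') mO).radical.comap (algebraMap O O') = mO ∧
    (∀ p : Ideal O', p.IsPrime → p.comap (algebraMap O O') = mO →
      p = (Ideal.map (algebraMap O O') mO).radical) ∧
    IsIntegrallyClosed (O' ⧸ (Ideal.map (algebraMap O O') mO).radical) := by
  classical
  obtain ⟨p₀, hp₀, hp₀c⟩ := hfiber
  set φ := algebraMap O O' with hφdef
  set I := Ideal.map φ mO with hIdef
  set m' := I.radical with hm'def
  -- basic facts
  have hmOprime : mO.IsPrime := by
    rw [hmO]
    haveI := (IsLocalRing.maximalIdeal.isMaximal A).isPrime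
    exact Ideal.IsPrime.comap _
  have hILEp₀ : I ≤ p₀ := Ideal.map_le_iff_le_comap.mpr (le_of_eq hp₀c.symm)
  have hITop : I ≠ ⊤ := fun h => hp₀.ne_top (top_le_iff.mp (h ▸ hILEp₀))
  have hker : ∀ c : O, c ∉ mO → φ c ≠ 0 := by
    intro c hc h0
    exact hc (by rw [← hp₀c]; exact Ideal.mem_comap.mpr (by rw [h0]; exact p₀.zero_mem))
  -- divisibility of mO by elements outside mO
  have hdiv : ∀ c : O, c ∉ mO → ∀ a ∈ mO, ∃ d ∈ mO, a = c * d := by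
    intro c hc a ha
    have hcu : IsUnit (c : A) := by
      by_contra hnu
      exact hc (by rw [hmO]; exact Ideal.mem_comap.mpr hnu)
    obtain ⟨u, hu⟩ := hcu
    have haA : (a : A) ∈ IsLocalRing.maximalIdeal A := by
      rw [hmO] at ha; exact ha
    have hdA : ((↑u⁻¹ : A) * (a : A)) ∈ IsLocalRing.maximalIdeal A :=
      Ideal.mul_mem_left _ _ haA
    refine ⟨⟨(↑u⁻¹ : A) * (a : A), hm hdA⟩, ?_, ?_⟩
    · rw [hmO]; exact Ideal.mem_comap.mpr hdA
    · apply Subtype.ext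
      push_cast
      rw [← hu, ← mul_assoc, Units.mul_inv, one_mul]
  have hKD : ∀ c : O, c ∉ mO → I = Ideal.span {φ c} * I := by
    intro c hc
    apply le_antisymm
    · rw [hIdef, Ideal.map_le_iff_le_comap]
      intro a ha
      obtain ⟨d, hd, hda⟩ := hdiv c hc a ha
      rw [Ideal.mem_comap, hda, map_mul]
      exact Ideal.mul_mem_mul (Ideal.subset_span rfl) (Ideal.mem_map_of_mem φ hd)
    · exact Ideal.mul_le_inf.trans inf_le_right
  have hKDpow : ∀ c : O, c ∉ mO → ∀ k : ℕ, I = Ideal.span {(φ c) ^ k} * I := by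
    intro c hc k
    induction k with
    | zero => rw [pow_zero, Ideal.span_singleton_one, Ideal.top_mul]
    | succ k ih =>
      calc I = Ideal.span {φ c} * I := hKD c hc
        _ = Ideal.span {φ c} * (Ideal.span {(φ c) ^ k} * I) := by rw [← ih]
        _ = Ideal.span {(φ c) ^ (k + 1)} * I := by
            rw [← mul_assoc, Ideal.span_singleton_mul_span_singleton, ← pow_succ']
  have hnotmemI : ∀ c : O, c ∉ mO → ∀ n : ℕ, (φ c) ^ n ∉ I := by
    intro c hc n hn
    rw [hKDpow c hc (n + 1)] at hn
    obtain ⟨z, hz, hzeq⟩ := Ideal.mem_span_singleton_mul.mp hn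
    have h2 : (φ c) ^ n * (φ c * z) = (φ c) ^ n * 1 := by
      linear_combination hzeq
    have h1 : φ c * z = 1 := mul_left_cancel₀ (pow_ne_zero n (hker c hc)) h2
    exact hp₀.ne_top (Ideal.eq_top_iff_one p₀ |>.mpr
      (h1 ▸ p₀.mul_mem_left (φ c) (hILEp₀ hz)))
  have hcomapm' : Ideal.comap φ m' = mO := by
    apply le_antisymm
    · intro c hc
      by_contra hc'
      obtain ⟨n, hn⟩ := (Ideal.mem_comap.mp hc : φ c ∈ m')
      exact hnotmemI c hc' n hn
    · calc mO ≤ Ideal.comap φ I := Ideal.le_comap_map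
        _ ≤ Ideal.comap φ m' := Ideal.comap_mono Ideal.le_radical
  -- the antichain lemma
  have hanti : ∀ P Q : Ideal O', P.IsPrime → Q.IsPrime → Ideal.comap φ P = mO →
      Ideal.comap φ Q = mO → P ≤ Q → P = Q := by
    intro P Q hP hQ hcP hcQ hle
    by_contra hne
    obtain ⟨x, hxQ, hxP⟩ := SetLike.exists_of_lt (lt_of_le_of_ne hle hne)
    obtain ⟨f, ⟨i₀, hi₀⟩, hfev⟩ := halg P hP hcP (Ideal.Quotient.mk P x)
    have hex : ∃ i, f.coeff i ∉ mO := ⟨i₀, hi₀⟩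
    have hfevP : Polynomial.eval₂ φ x f ∈ P := by
      rw [← Ideal.Quotient.eq_zero_iff_mem]
      rw [Polynomial.hom_eval₂]
      exact hfev
    refine stmt13_AL φ mO P Q hP hQ hle ?_ ?_ x hxQ hxP (Nat.find hex) f
      (Nat.find_spec hex) ?_ hfevP
    · intro r hr
      have : r ∈ Ideal.comap φ P := by rw [hcP]; exact hr
      exact Ideal.mem_comap.mp this
    · intro r hr
      rw [← hcQ]; exact Ideal.mem_comap.mpr hr
    · intro i hi
      by_contra hcon
      exact Nat.find_min hex hi hcon
  -- minimal primes: generalized localization property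
  have hML : ∀ P ∈ I.minimalPrimes, ∀ x ∈ P,
      ∃ s, s ∉ P ∧ ∃ n : ℕ, s * x ^ n ∈ I := by
    intro P hPmin x hxP
    have hP : P.IsPrime := hPmin.1.1
    by_contra hcon
    push_neg at hcon
    have hdisj : Disjoint (I : Set O') (stmt13_SP P hP x : Set O') := by
      rw [Set.disjoint_left]
      rintro z hzI ⟨s, hs, n, rfl⟩
      exact hcon s hs n hzI
    obtain ⟨Q, hQ, hIQ, hQdisj⟩ := Ideal.exists_le_prime_disjoint _ _ hdisj
    have hQP : Q ≤ P := by
      intro y hyQ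
      by_contra hyP
      exact Set.disjoint_left.mp hQdisj hyQ ⟨y, hyP, 0, by simp⟩
    have hPQ : P ≤ Q := hPmin.2 ⟨hQ, hIQ⟩ hQP
    refine Set.disjoint_left.mp hQdisj (hPQ hxP) ⟨1, ?_, 1, by simp⟩
    exact fun h => hP.ne_top ((Ideal.eq_top_iff_one P).mpr h)
  have hminover : ∀ P ∈ I.minimalPrimes, Ideal.comap φ P = mO := by
    intro P hPmin
    have hP : P.IsPrime := hPmin.1.1
    apply le_antisymm
    · intro c hc
      by_contra hc'
      obtain ⟨s, hsP, n, hsn⟩ := hML P hPmin (φ c) (Ideal.mem_comap.mp hc)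
      rw [hKDpow c hc' (n + 1)] at hsn
      obtain ⟨z, hzI, hzeq⟩ := Ideal.mem_span_singleton_mul.mp hsn
      have h2 : (φ c) ^ n * (φ c * z) = (φ c) ^ n * s := by linear_combination hzeq
      have hs : s = φ c * z := (mul_left_cancel₀ (pow_ne_zero n (hker c hc')) h2).symm
      exact hsP (hs ▸ P.mul_mem_right z (Ideal.mem_comap.mp hc))
    · exact le_trans Ideal.le_comap_map (Ideal.comap_mono hPmin.1.2)
  -- the core: any two primes over mO coincide
  have hcore : ∀ q₁ q₂ : Ideal O', q₁.IsPrime → q₂.IsPrime →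
      Ideal.comap φ q₁ = mO → Ideal.comap φ q₂ = mO → q₁ = q₂ := by
    intro q₁ q₂ hq₁ hq₂ hc₁ hc₂
    by_contra hne
    have hnle : ¬ q₁ ≤ q₂ := fun h => hne (hanti _ _ hq₁ hq₂ hc₁ hc₂ h)
    obtain ⟨x, hx₁, hx₂⟩ := SetLike.not_le_iff_exists.mp hnle
    have hm'le : ∀ q : Ideal O', q.IsPrime → Ideal.comap φ q = mO → m' ≤ q := by
      intro q hq hcq
      exact hq.radical_le_iff.mpr (Ideal.map_le_iff_le_comap.mpr (le_of_eq hcq.symm))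
    set col := m'.colon (Ideal.span {x}) with hcol
    have hm'col : m' ≤ col := by
      intro v hv
      exact Ideal.mem_colon_span_singleton.mpr (m'.mul_mem_right x hv)
    have hS1 : ∃ c₀ : O, c₀ ∉ mO ∧ φ c₀ ∈ Ideal.span {x} ⊔ col := by
      by_contra hcon
      push_neg at hcon
      have hdisj : Disjoint ((Ideal.span {x} ⊔ col : Ideal O') : Set O')
          (stmt13_SL φ mO hmOprime : Set O') := by
        rw [Set.disjoint_left]
        rintro z hzT ⟨c, hc, rfl⟩
        exact hcon c hc hzT
      obtain ⟨P, hP, hTP, hPdisj⟩ := Ideal.exists_le_prime_disjoint _ _ hdisj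
      have hm'P : m' ≤ P := le_trans hm'col (le_trans le_sup_right hTP)
      have hcP : Ideal.comap φ P = mO := by
        apply le_antisymm
        · intro c hc
          by_contra hc'
          exact Set.disjoint_left.mp hPdisj (Ideal.mem_comap.mp hc) ⟨c, hc', rfl⟩
        · exact le_trans (le_trans Ideal.le_comap_map (Ideal.comap_mono Ideal.le_radical))
            (Ideal.comap_mono hm'P)
      have hIP : I ≤ P := le_trans Ideal.le_radical hm'P
      haveI := hP
      obtain ⟨qs, hqsmin, hqsP⟩ := Ideal.exists_minimalPrimes_le hIP
      have hqseq : qs = P := hanti _ _ hqsmin.1.1 hP (hminover _ hqsmin) hcP hqsP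
      have hPmin : P ∈ I.minimalPrimes := hqseq ▸ hqsmin
      have hxP : x ∈ P := hTP (Ideal.mem_sup_left (Ideal.subset_span rfl))
      obtain ⟨s, hsP, n, hsn⟩ := hML P hPmin x hxP
      cases n with
      | zero => exact hsP (hIP (by simpa using hsn))
      | succ n =>
        have hsx : s * x ∈ m' := by
          refine ⟨n + 1, ?_⟩
          have h3 : (s * x) ^ (n + 1) = s ^ n * (s * x ^ (n + 1)) := by ring
          rw [h3]
          exact I.mul_mem_left _ hsn
        exact hsP (hTP (Ideal.mem_sup_right (Ideal.mem_colon_span_singleton.mpr hsx)))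
    obtain ⟨c₀, hc₀, hφc₀T⟩ := hS1
    obtain ⟨y, hy, v, hv, hyv⟩ := Submodule.mem_sup.mp hφc₀T
    obtain ⟨u, hu⟩ := Ideal.mem_span_singleton'.mp hy
    set lam := φ c₀ with hlamdef
    set r := u * x with hrdef
    have hlam_eq : lam = r + v := by rw [← hyv, ← hu]
    have hvx : v * x ∈ m' := Ideal.mem_colon_span_singleton.mp hv
    have hrq₁ : r ∈ q₁ := q₁.mul_mem_left u hx₁
    have hvq₂ : v ∈ q₂ := by
      have h4 : v * x ∈ q₂ := hm'le q₂ hq₂ hc₂ hvx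
      exact (hq₂.mem_or_mem h4).resolve_right hx₂
    have hlamq₁ : lam ∉ q₁ := fun h => hc₀ (by rw [← hc₁]; exact Ideal.mem_comap.mpr h)
    have hlamq₂ : lam ∉ q₂ := fun h => hc₀ (by rw [← hc₂]; exact Ideal.mem_comap.mpr h)
    have hz : ((X ^ 2 - X : O'[X]).scaleRoots lam).eval r ∈ m' := by
      rw [stmt13_scale2]
      have h5 : (X ^ 2 - C lam * X : O'[X]).eval r = r * r - lam * r := by
        simp [sq]
      rw [h5]
      have h6 : r * r - lam * r = -(u * (v * x)) := by
        rw [hlam_eq]; ring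
      rw [h6]
      exact m'.neg_mem (m'.mul_mem_left u hvx)
    obtain ⟨b, hb⟩ := stmt13_ML2 I hITop lam (hker c₀ hc₀) (hKDpow c₀ hc₀) r
      (X ^ 2 - X) stmt13_monic2 (by rw [stmt13_nd2]; omega) hz
    have hbq₁ : b ∈ q₁ := (hq₁.mem_or_mem (hb ▸ hrq₁)).resolve_left hlamq₁
    have h1b : (1 : O') - b ∈ q₂ := by
      have h7 : lam * (1 - b) = v := by
        rw [mul_sub, mul_one, ← hb, hlam_eq]; ring
      exact (hq₂.mem_or_mem (h7 ▸ hvq₂)).resolve_left hlamq₂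
    have h8 : (1 : O') ∈ IsLocalRing.maximalIdeal O' := by
      have hb' := IsLocalRing.le_maximalIdeal hq₁.ne_top hbq₁
      have h1b' := IsLocalRing.le_maximalIdeal hq₂.ne_top h1b
      simpa using (IsLocalRing.maximalIdeal O').add_mem hb' h1b'
    exact (IsLocalRing.maximalIdeal.isMaximal O').ne_top
      ((Ideal.eq_top_iff_one _).mpr h8)
  -- primality of m'
  haveI := hp₀
  obtain ⟨qh, hqhmin, hqhp₀⟩ := Ideal.exists_minimalPrimes_le hILEp₀
  have hm'eq : m' = qh := by
    have huniqmin : I.minimalPrimes = {qh} := by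
      apply Set.eq_singleton_iff_unique_mem.mpr
      refine ⟨hqhmin, ?_⟩
      intro q hq
      exact hcore q qh hq.1.1 hqhmin.1.1 (hminover q hq) (hminover qh hqhmin)
    rw [hm'def, ← Ideal.sInf_minimalPrimes, huniqmin, sInf_singleton]
  have hm'prime : m'.IsPrime := hm'eq ▸ hqhmin.1.1
  -- uniqueness
  have huniq : ∀ p : Ideal O', p.IsPrime → Ideal.comap φ p = mO → p = m' :=
    fun p hp hpc => hcore p m' hp hm'prime hpc hcomapm'
  -- denominators
  have hDEN : ∀ s : O', s ∉ m' → ∃ (t : O') (c₀ : O), c₀ ∉ mO ∧ φ c₀ - s * t ∈ m' := by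
    intro s hs
    by_contra hcon
    push_neg at hcon
    have hdisj : Disjoint ((Ideal.span {s} ⊔ m' : Ideal O') : Set O')
        (stmt13_SL φ mO hmOprime : Set O') := by
      rw [Set.disjoint_left]
      rintro z hzT ⟨c, hc, rfl⟩
      obtain ⟨y, hy, w, hw, hyw⟩ := Submodule.mem_sup.mp hzT
      obtain ⟨t, ht⟩ := Ideal.mem_span_singleton'.mp hy
      have h9 : φ c - s * t ∈ m' := by
        have : φ c - s * t = w := by rw [← hyw, ← ht]; ring
        rw [this]; exact hw
      exact hcon t c hc h9
    obtain ⟨P, hP, hTP, hPdisj⟩ := Ideal.exists_le_prime_disjoint _ _ hdisj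
    have hcP : Ideal.comap φ P = mO := by
      apply le_antisymm
      · intro c hc
        by_contra hc'
        exact Set.disjoint_left.mp hPdisj (Ideal.mem_comap.mp hc) ⟨c, hc', rfl⟩
      · exact le_trans (le_trans Ideal.le_comap_map (Ideal.comap_mono Ideal.le_radical))
          (Ideal.comap_mono (le_trans le_sup_right hTP))
    have : P = m' := huniq P hP hcP
    exact hs (this ▸ hTP (Ideal.mem_sup_left (Ideal.subset_span rfl)))
  -- integral closedness of the quotient
  have hIC : IsIntegrallyClosed (O' ⧸ m') := by
    haveI := hm'prime
    rw [isIntegrallyClosed_iff (FractionRing (O' ⧸ m'))]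
    intro ξ hξ
    set mk' : O' →+* O' ⧸ m' := Ideal.Quotient.mk m' with hmk'
    set ψ' := algebraMap (O' ⧸ m') (FractionRing (O' ⧸ m')) with hψ'
    have hψ'inj : Function.Injective ψ' := IsFractionRing.injective _ _
    obtain ⟨abar, sbar, hsbar, hdiv'⟩ := IsFractionRing.div_surjective (A := O' ⧸ m') ξ
    obtain ⟨s, hsmk⟩ := Ideal.Quotient.mk_surjective sbar
    have hsnot : s ∉ m' := by
      intro h
      exact nonZeroDivisors.ne_zero hsbar
        (by rw [← hsmk]; exact (Ideal.Quotient.eq_zero_iff_mem).mpr h)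
    obtain ⟨t, c₀, hc₀, hden⟩ := hDEN s hsnot
    set lam := φ c₀ with hlamdef
    have hlammk : mk' lam = mk' s * mk' t := by
      rw [← map_mul]
      exact (Ideal.Quotient.mk_eq_mk_iff_sub_mem _ _).mpr hden
    have hmklam0 : mk' lam ≠ 0 := by
      rw [Ne, Ideal.Quotient.eq_zero_iff_mem]
      exact fun h => hc₀ (by rw [← hcomapm']; exact Ideal.mem_comap.mpr h)
    have hψ'lam0 : ψ' (mk' lam) ≠ 0 := fun h => hmklam0 (hψ'inj (by simpa using h))
    have hψ's0 : ψ' sbar ≠ 0 := fun h =>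
      nonZeroDivisors.ne_zero hsbar (hψ'inj (by simpa using h))
    have hξlam : ξ * ψ' (mk' lam) = ψ' (abar * mk' t) := by
      rw [← hdiv', hlammk, hsmk, map_mul, map_mul]
      field_simp
      rw [← hψ']; field_simp
    obtain ⟨a', hamk⟩ := Ideal.Quotient.mk_surjective (abar * mk' t)
    obtain ⟨g, hgmon, hgev⟩ := hξ
    have hnd : 1 ≤ g.natDegree := by
      by_contra hcn
      push_neg at hcn
      have h0 : g.natDegree = 0 := Nat.lt_one_iff.mp hcn
      have hone : g = 1 := (hgmon.natDegree_eq_zero).mp h0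
      rw [hone] at hgev
      simp at hgev
    obtain ⟨gq, hgqmap, hgqdeg, hgqmon⟩ := Polynomial.lifts_and_degree_eq_and_monic
      ((Polynomial.mem_lifts g).mpr (Polynomial.map_surjective mk'
        Ideal.Quotient.mk_surjective g)) hgmon
    have hgqnd : 1 ≤ gq.natDegree := by
      rw [Polynomial.natDegree_eq_of_degree_eq hgqdeg]
      exact hnd
    have hΦev : Polynomial.eval₂ (ψ'.comp mk') ξ gq = 0 := by
      rw [← Polynomial.eval₂_map, hgqmap]
      exact hgev
    have hsc := Polynomial.scaleRoots_eval₂_eq_zero (ψ'.comp mk') (s := lam) hΦev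
    have hΦlam : (ψ'.comp mk') lam * ξ = (ψ'.comp mk') a' := by
      simp only [RingHom.comp_apply]
      rw [hamk, mul_comm]
      exact hξlam
    rw [hΦlam] at hsc
    rw [show ((ψ'.comp mk') a') = (ψ'.comp mk') a' from rfl] at hsc
    rw [Polynomial.eval₂_at_apply] at hsc
    have hE : (gq.scaleRoots lam).eval a' ∈ m' := by
      rw [← Ideal.Quotient.eq_zero_iff_mem]
      apply hψ'inj
      simpa using hsc
    obtain ⟨b, hab⟩ := stmt13_ML2 I hITop lam (hker c₀ hc₀) (hKDpow c₀ hc₀) a'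
      gq hgqmon hgqnd hE
    refine ⟨mk' b, ?_⟩
    have hfin : ψ' (mk' b) * ψ' (mk' lam) = ξ * ψ' (mk' lam) := by
      rw [hξlam, ← hamk, ← map_mul, ← map_mul, hab, mul_comm]
    exact (mul_right_cancel₀ hψ'lam0 hfin)
  exact ⟨hm'prime, hcomapm', huniq, hIC⟩
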